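/- Let ψ : {1,…,n} → ℂ and let P be the homogeneous operator of degree 0 associated to ψ, i.e. P(e_i) = ψ(i)·e_i for all i. Suppose P is a Reynolds operator, i.e. P(x)·P(y) = P(x·P(y) + P(x)·y − P(x)·P(y)) for all x, y ∈ A, and suppose ψ(t) = 0 for all 1 ≤ t ≤ ⌊n/2⌋. Then ψ is nonzero at most at one index: for all r, s with ⌊n/2⌋ < r < s ≤ n, either ψ(r) = 0 or ψ(s) = 0. -/

import Mathlib

open Finset

/-- Coordinate space of the `n`-dimensional complex null-filiform associative algebra,
with respect to the basis `e_1, …, e_n` (coordinate `m : Fin n` corresponds to `e_{m+1}`). -/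
abbrev NF (n : ℕ) : Type := Fin n → ℂ

/-- Multiplication of the null-filiform algebra: `e_i · e_j = e_{i+j}` if `i + j ≤ n`
and `e_i · e_j = 0` if `i + j > n`, extended bilinearly. -/
noncomputable def nfMul {n : ℕ} (x y : NF n) : NF n :=
  fun m => ∑ i : Fin n, ∑ j : Fin n,
    if (i : ℕ) + (j : ℕ) + 1 = (m : ℕ) then x i * y j else 0

/-- The basis element `e_k`, for `1 ≤ k ≤ n` (it is `0` if `k = 0` or `k > n`). -/
noncomputable def nfE (n k : ℕ) : NF n := fun m => if (m : ℕ) + 1 = k then 1 else 0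

/-- The `k`-th power (for `k ≥ 1`) of an element of the null-filiform algebra. -/
noncomputable def nfPow {n : ℕ} (x : NF n) : ℕ → NF n
  | 0 => 0
  | 1 => x
  | k + 2 => nfMul (nfPow x (k + 1)) x

lemma nfMul_zero_left {n : ℕ} (y : NF n) : nfMul 0 y = 0 := by
  funext m; simp [nfMul]

lemma nfMul_smul_right {n : ℕ} (a : ℂ) (x y : NF n) :
    nfMul x (a • y) = a • nfMul x y := by
  funext m
  simp only [nfMul, Pi.smul_apply, smul_eq_mul, Finset.mul_sum, mul_ite, mul_zero]
  congr 1; funext i; congr 1; funext j; ring_nf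

lemma nfMul_E {n i j : ℕ} (hi1 : 1 ≤ i) (hin : i ≤ n) (hj1 : 1 ≤ j) (hjn : j ≤ n) :
    nfMul (nfE n i) (nfE n j) = nfE n (i + j) := by
  obtain ⟨i, rfl⟩ : ∃ i', i = i' + 1 := ⟨i - 1, by omega⟩
  obtain ⟨j, rfl⟩ : ∃ j', j = j' + 1 := ⟨j - 1, by omega⟩
  funext m
  have hi' : i < n := by omega
  have hj' : j < n := by omega
  simp only [nfMul, nfE]
  rw [Finset.sum_eq_single (⟨i, hi'⟩ : Fin n)]
  · rw [Finset.sum_eq_single (⟨j, hj'⟩ : Fin n)]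
    · have hiff : ((i:ℕ) + j + 1 = (m:ℕ)) ↔ ((m:ℕ) + 1 = i + 1 + (j+1)) := by omega
      simp [hiff]
    · intro b _ hb
      have : ¬ ((b : ℕ) + 1 = j + 1) := by
        intro hc; apply hb; apply Fin.ext; simp; omega
      simp [this, show ¬ ((b : ℕ) = j) by omega]
    · simp
  · intro b _ hb
    have : ¬ ((b : ℕ) + 1 = i + 1) := by
      intro hc; apply hb; apply Fin.ext; simp; omega
    simp [this, show ¬ ((b : ℕ) = i) by omega]
  · simp

/-- Reynolds operator, homogeneous of degree `0`, case (b): if `ψ` vanishes on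
`{1, …, ⌊n/2⌋}`, then `ψ` is nonzero at most at one index. -/
theorem reynolds_degree0_case_b (n : ℕ) (hn : 1 ≤ n) (ψ : ℕ → ℂ)
    (P : NF n →ₗ[ℂ] NF n)
    (hP : ∀ i, 1 ≤ i → i ≤ n → P (nfE n i) = ψ i • nfE n i)
    (hRey : ∀ x y : NF n,
      nfMul (P x) (P y) =
        P (nfMul x (P y) + nfMul (P x) y - nfMul (P x) (P y)))
    (hψ : ∀ t, 1 ≤ t → t ≤ n / 2 → ψ t = 0) :
    ∀ r s, n / 2 < r → r < s → s ≤ n → ψ r = 0 ∨ ψ s = 0 := by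
  intro r s hr hrs hsn
  set a := s - r with ha
  have ha1 : 1 ≤ a := by omega
  have han2 : a ≤ n / 2 := by omega
  have hψa : ψ a = 0 := hψ a ha1 han2
  have hPa : P (nfE n a) = 0 := by
    rw [hP a ha1 (by omega), hψa, zero_smul]
  have hPr : P (nfE n r) = ψ r • nfE n r := hP r (by omega) (by omega)
  have key := hRey (nfE n a) (nfE n r)
  rw [hPa, hPr, nfMul_zero_left, nfMul_zero_left, nfMul_smul_right,
    nfMul_E ha1 (by omega) (by omega : 1 ≤ r) (by omega)] at key
  have has : a + r = s := by omega
  rw [has] at key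
  have key2 : (0 : NF n) = ψ r • (ψ s • nfE n s) := by
    have := key
    rw [sub_zero, add_zero, map_smul, hP s (by omega) hsn] at this
    exact this
  have hs' : s - 1 < n := by omega
  have := congrFun key2 ⟨s - 1, hs'⟩
  simp only [Pi.zero_apply, Pi.smul_apply, smul_eq_mul, nfE] at this
  have hcond : (s - 1) + 1 = s := by omega
  rw [if_pos hcond, mul_one] at this
  rcases mul_eq_zero.mp this.symm with h | h
  · exact Or.inl h
  · exact Or.inr h
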